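/- arXiv:1808.02842 — 17 statements merged into one kernel-verified Lean document; each statement's English description precedes it below -/
import Mathlib

section
/- For all Ste > 0 and Bi > 0, define ξ_min = (√(4·Ste² + 8·Ste + 1/Bi²) − 1/Bi) / (2(2+Ste)) and ξ_max = (√(12·Ste² + 36·Ste + 9/Bi²) − 3/Bi) / (2(3+Ste)). Then 0 < ξ_min < ξ_max. -/
theorem stmt_0 (Ste Bi : ℝ) (hSte : 0 < Ste) (hBi : 0 < Bi) :
    0 < (Real.sqrt (4*Ste^2 + 8*Ste + 1/Bi^2) - 1/Bi) / (2*(2+Ste)) ∧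
    (Real.sqrt (4*Ste^2 + 8*Ste + 1/Bi^2) - 1/Bi) / (2*(2+Ste)) <
      (Real.sqrt (12*Ste^2 + 36*Ste + 9/Bi^2) - 3/Bi) / (2*(3+Ste)) := by
  set b : ℝ := 1 / Bi with hbdef
  have hb : 0 < b := by positivity
  have hA : (4*Ste^2 + 8*Ste + 1/Bi^2) = 4*Ste^2 + 8*Ste + b^2 := by
    rw [hbdef]; field_simp
  have hB : (12*Ste^2 + 36*Ste + 9/Bi^2) = 12*Ste^2 + 36*Ste + 9*b^2 := by
    rw [hbdef]; field_simp
  rw [hA, hB]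
  set a : ℝ := Real.sqrt (4*Ste^2 + 8*Ste + b^2) with hadef
  set c : ℝ := Real.sqrt (12*Ste^2 + 36*Ste + 9*b^2) with hcdef
  clear_value b a c
  have hAnn : (0:ℝ) ≤ 4*Ste^2 + 8*Ste + b^2 := by positivity
  have hBnn : (0:ℝ) ≤ 12*Ste^2 + 36*Ste + 9*b^2 := by positivity
  have ha2 : a^2 = 4*Ste^2 + 8*Ste + b^2 := by rw [hadef]; exact Real.sq_sqrt hAnn
  have hc2 : c^2 = 12*Ste^2 + 36*Ste + 9*b^2 := by rw [hcdef]; exact Real.sq_sqrt hBnn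
  have ha0 : 0 ≤ a := by rw [hadef]; exact Real.sqrt_nonneg _
  have hc0 : 0 ≤ c := by rw [hcdef]; exact Real.sqrt_nonneg _
  have hab : b < a := by nlinarith [sq_nonneg (a - b), sq_nonneg (a + b)]
  have hkey : b * a < 2*Ste^2 + 4*Ste + b^2 := by
    nlinarith [sq_nonneg (a - b), mul_pos (sub_pos.mpr hab) (by linarith : (0:ℝ) < a + b)]
  have hmain : a*(3+Ste) + (3+2*Ste)*b < c*(2+Ste) := by
    by_contra h
    push_neg at h
    have hrhs : 0 < a*(3+Ste) + (3+2*Ste)*b := by nlinarith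
    have h2 : (c*(2+Ste))^2 ≤ (a*(3+Ste) + (3+2*Ste)*b)^2 := by
      have := mul_le_mul h h (by positivity) (le_of_lt hrhs)
      nlinarith [this]
    nlinarith [h2, mul_pos (mul_pos (by linarith : (0:ℝ) < 3+Ste)
      (by linarith : (0:ℝ) < 3+2*Ste)) (sub_pos.mpr hkey)]
  constructor
  · apply div_pos (by linarith) (by linarith)
  · have h3b : (3:ℝ)/Bi = 3*b := by rw [hbdef]; ring
    rw [h3b, div_lt_div_iff₀ (by linarith) (by linarith)]
    have e1 : (a - b) * (2 * (3 + Ste))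
        = 2*(a*(3+Ste) + (3+2*Ste)*b) - (12+6*Ste)*b := by ring
    have e2 : (c - 3*b) * (2 * (2 + Ste)) = 2*(c*(2+Ste)) - (12+6*Ste)*b := by ring
    rw [e1, e2]
    linarith [hmain]
end

section
/- For all Ste > 0 and Bi > 0, the polynomial p₁(z) = (12 + 9·Ste + 2·Ste²)z⁴ + ((21 + 6·Ste)/Bi)z³ + (12/Bi² − 42·Ste − 12·Ste² − 18)z² − ((30·Ste + 9)/Bi)z + 9·Ste(1 + 2·Ste) satisfies p₁(ξ_min) > 0, where ξ_min = (√(4·Ste² + 8·Ste + 1/Bi²) − 1/Bi)/(2(2+Ste)). -/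
set_option maxHeartbeats 1000000 in
theorem stmt_1 (Ste Bi : ℝ) (hSte : 0 < Ste) (hBi : 0 < Bi)
    (p₁ : ℝ → ℝ)
    (hp : ∀ z, p₁ z = (12 + 9*Ste + 2*Ste^2)*z^4 + ((21 + 6*Ste)/Bi)*z^3 +
      (12/Bi^2 - 42*Ste - 12*Ste^2 - 18)*z^2 - ((30*Ste + 9)/Bi)*z + 9*Ste*(1 + 2*Ste))
    (ξmin : ℝ)
    (hξ : ξmin = (Real.sqrt (4*Ste^2 + 8*Ste + 1/Bi^2) - 1/Bi) / (2*(2+Ste))) :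
    0 < p₁ ξmin := by
  have hb : 0 < 1/Bi := one_div_pos.mpr hBi
  set s : ℝ := Real.sqrt (4*Ste^2 + 8*Ste + 1/Bi^2) with hsdef
  have hΔ0 : (0:ℝ) ≤ 4*Ste^2 + 8*Ste + 1/Bi^2 := by positivity
  have hs2 : s^2 = 4*Ste^2 + 8*Ste + 1/Bi^2 := Real.sq_sqrt hΔ0
  have hs0 : 0 ≤ s := Real.sqrt_nonneg _
  have ha : (0:ℝ) < 2 + Ste := by linarith
  have h2a : 2*(2+Ste)*ξmin = s - 1/Bi := by
    rw [hξ]; field_simp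
  have hq : (2+Ste)*ξmin^2 + (1/Bi)*ξmin - Ste = 0 := by
    have hq4 : 4*(2+Ste)*((2+Ste)*ξmin^2 + (1/Bi)*ξmin - Ste) = 0 := by
      linear_combination (2*(2+Ste)*ξmin + s + 1/Bi) * h2a + hs2
    have h4 : (4*(2+Ste) : ℝ) ≠ 0 := by positivity
    exact (mul_eq_zero.mp hq4).resolve_left h4
  have hb2 : 0 < (1/Bi)^2 := pow_pos hb 2
  have t1 : 0 < Ste*(1/Bi)^2 := mul_pos hSte hb2
  have t2 : 0 < Ste^2*(1/Bi)^2 := mul_pos (pow_pos hSte 2) hb2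
  have t3 : 0 < Ste^2 := pow_pos hSte 2
  have t4 : 0 < Ste^3 := pow_pos hSte 3
  have t5 : 0 < Ste^4 := pow_pos hSte 4
  have hM : 0 < (18*(1/Bi)^2 + 72*Ste + 24*Ste*(1/Bi)^2 + 132*Ste^2 + 8*Ste^2*(1/Bi)^2 + 80*Ste^3 + 16*Ste^4) := by linarith
  have hβ : 0 < (Ste*(18*(1/Bi)^2 + 36*Ste + 24*Ste*(1/Bi)^2 + 66*Ste^2 + 8*Ste^2*(1/Bi)^2 + 40*Ste^3 + 8*Ste^4)) := mul_pos hSte (by linarith)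
  have hR : 0 < 2*(2+Ste)*(Ste*(18*(1/Bi)^2 + 36*Ste + 24*Ste*(1/Bi)^2 + 66*Ste^2 + 8*Ste^2*(1/Bi)^2 + 40*Ste^3 + 8*Ste^4)) + (1/Bi)^2*(18*(1/Bi)^2 + 72*Ste + 24*Ste*(1/Bi)^2 + 132*Ste^2 + 8*Ste^2*(1/Bi)^2 + 80*Ste^3 + 16*Ste^4) := by
    have h1 := mul_pos (by linarith : (0:ℝ) < 2*(2+Ste)) hβ
    have h2 := mul_pos hb2 hM
    linarith
  have hfin : (2+Ste)^3 * p₁ ξmin = (Ste*(18*(1/Bi)^2 + 36*Ste + 24*Ste*(1/Bi)^2 + 66*Ste^2 + 8*Ste^2*(1/Bi)^2 + 40*Ste^3 + 8*Ste^4)) - (1/Bi)*(18*(1/Bi)^2 + 72*Ste + 24*Ste*(1/Bi)^2 + 132*Ste^2 + 8*Ste^2*(1/Bi)^2 + 80*Ste^3 + 16*Ste^4)*ξmin := by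
    rw [hp]
    linear_combination ((48 + 84*Ste + 56*Ste^2 + 17*Ste^3 + 2*Ste^4)*ξmin^2 + (1/Bi)*(60 + 78*Ste + 32*Ste^2 + 4*Ste^3)*ξmin + (18*(1/Bi)^2 + 24*Ste*(1/Bi)^2 + 8*Ste^2*(1/Bi)^2 - 72 - 216*Ste - 204*Ste^2 - 77*Ste^3 - 10*Ste^4)) * hq
  have hbms : ((1/Bi)*(18*(1/Bi)^2 + 72*Ste + 24*Ste*(1/Bi)^2 + 132*Ste^2 + 8*Ste^2*(1/Bi)^2 + 80*Ste^3 + 16*Ste^4)*s)^2 = ((1/Bi)*(18*(1/Bi)^2 + 72*Ste + 24*Ste*(1/Bi)^2 + 132*Ste^2 + 8*Ste^2*(1/Bi)^2 + 80*Ste^3 + 16*Ste^4))^2 * (4*Ste^2 + 8*Ste + 1/Bi^2) := by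
    rw [mul_pow, hs2]
  have hdiff : (2*(2+Ste)*(Ste*(18*(1/Bi)^2 + 36*Ste + 24*Ste*(1/Bi)^2 + 66*Ste^2 + 8*Ste^2*(1/Bi)^2 + 40*Ste^3 + 8*Ste^4)) + (1/Bi)^2*(18*(1/Bi)^2 + 72*Ste + 24*Ste*(1/Bi)^2 + 132*Ste^2 + 8*Ste^2*(1/Bi)^2 + 80*Ste^3 + 16*Ste^4))^2
      - ((1/Bi)*(18*(1/Bi)^2 + 72*Ste + 24*Ste*(1/Bi)^2 + 132*Ste^2 + 8*Ste^2*(1/Bi)^2 + 80*Ste^3 + 16*Ste^4))^2 * (4*Ste^2 + 8*Ste + 1/Bi^2) = 20736*Ste^4 + 96768*Ste^5 + 196992*Ste^6 + 228480*Ste^7 + 165136*Ste^8 + 76160*Ste^9 + 21888*Ste^10 + 3584*Ste^11 + 256*Ste^12 := by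
    ring
  have tp : (0:ℝ) < 20736*Ste^4 + 96768*Ste^5 + 196992*Ste^6 + 228480*Ste^7 + 165136*Ste^8 + 76160*Ste^9 + 21888*Ste^10 + 3584*Ste^11 + 256*Ste^12 := by positivity
  have keysq : ((1/Bi)*(18*(1/Bi)^2 + 72*Ste + 24*Ste*(1/Bi)^2 + 132*Ste^2 + 8*Ste^2*(1/Bi)^2 + 80*Ste^3 + 16*Ste^4)*s)^2 < (2*(2+Ste)*(Ste*(18*(1/Bi)^2 + 36*Ste + 24*Ste*(1/Bi)^2 + 66*Ste^2 + 8*Ste^2*(1/Bi)^2 + 40*Ste^3 + 8*Ste^4)) + (1/Bi)^2*(18*(1/Bi)^2 + 72*Ste + 24*Ste*(1/Bi)^2 + 132*Ste^2 + 8*Ste^2*(1/Bi)^2 + 80*Ste^3 + 16*Ste^4))^2 := by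
    rw [hbms]; linarith
  have key : (1/Bi)*(18*(1/Bi)^2 + 72*Ste + 24*Ste*(1/Bi)^2 + 132*Ste^2 + 8*Ste^2*(1/Bi)^2 + 80*Ste^3 + 16*Ste^4)*s < 2*(2+Ste)*(Ste*(18*(1/Bi)^2 + 36*Ste + 24*Ste*(1/Bi)^2 + 66*Ste^2 + 8*Ste^2*(1/Bi)^2 + 40*Ste^3 + 8*Ste^4)) + (1/Bi)^2*(18*(1/Bi)^2 + 72*Ste + 24*Ste*(1/Bi)^2 + 132*Ste^2 + 8*Ste^2*(1/Bi)^2 + 80*Ste^3 + 16*Ste^4) :=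
    lt_of_pow_lt_pow_left₀ 2 hR.le keysq
  have e : 2*(2+Ste)*((1/Bi)*(18*(1/Bi)^2 + 72*Ste + 24*Ste*(1/Bi)^2 + 132*Ste^2 + 8*Ste^2*(1/Bi)^2 + 80*Ste^3 + 16*Ste^4)*ξmin) = (1/Bi)*(18*(1/Bi)^2 + 72*Ste + 24*Ste*(1/Bi)^2 + 132*Ste^2 + 8*Ste^2*(1/Bi)^2 + 80*Ste^3 + 16*Ste^4)*s - (1/Bi)^2*(18*(1/Bi)^2 + 72*Ste + 24*Ste*(1/Bi)^2 + 132*Ste^2 + 8*Ste^2*(1/Bi)^2 + 80*Ste^3 + 16*Ste^4) := by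
    linear_combination ((1/Bi)*(18*(1/Bi)^2 + 72*Ste + 24*Ste*(1/Bi)^2 + 132*Ste^2 + 8*Ste^2*(1/Bi)^2 + 80*Ste^3 + 16*Ste^4)) * h2a
  have h10 : 2*(2+Ste)*((1/Bi)*(18*(1/Bi)^2 + 72*Ste + 24*Ste*(1/Bi)^2 + 132*Ste^2 + 8*Ste^2*(1/Bi)^2 + 80*Ste^3 + 16*Ste^4)*ξmin) < 2*(2+Ste)*(Ste*(18*(1/Bi)^2 + 36*Ste + 24*Ste*(1/Bi)^2 + 66*Ste^2 + 8*Ste^2*(1/Bi)^2 + 40*Ste^3 + 8*Ste^4)) := by linarith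
  have h11 : (1/Bi)*(18*(1/Bi)^2 + 72*Ste + 24*Ste*(1/Bi)^2 + 132*Ste^2 + 8*Ste^2*(1/Bi)^2 + 80*Ste^3 + 16*Ste^4)*ξmin < (Ste*(18*(1/Bi)^2 + 36*Ste + 24*Ste*(1/Bi)^2 + 66*Ste^2 + 8*Ste^2*(1/Bi)^2 + 40*Ste^3 + 8*Ste^4)) :=
    lt_of_mul_lt_mul_left h10 (by linarith : (0:ℝ) ≤ 2*(2+Ste))
  have hpos : 0 < (2+Ste)^3 * p₁ ξmin := by rw [hfin]; linarith
  have ha3 : 0 < (2+Ste)^3 := pow_pos ha 3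
  nlinarith [hpos, ha3]
end

section
/- For all Ste > 0 and Bi > 0, the polynomial p₁(z) = (12 + 9·Ste + 2·Ste²)z⁴ + ((21 + 6·Ste)/Bi)z³ + (12/Bi² − 42·Ste − 12·Ste² − 18)z² − ((30·Ste + 9)/Bi)z + 9·Ste(1 + 2·Ste) satisfies p₁(ξ_max) < 0, where ξ_max = (√(12·Ste² + 36·Ste + 9/Bi²) − 3/Bi)/(2(3+Ste)). -/
theorem stmt_2 (Ste Bi : ℝ) (hSte : 0 < Ste) (hBi : 0 < Bi)
    (p₁ : ℝ → ℝ)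
    (hp : ∀ z, p₁ z = (12 + 9*Ste + 2*Ste^2)*z^4 + ((21 + 6*Ste)/Bi)*z^3 +
      (12/Bi^2 - 42*Ste - 12*Ste^2 - 18)*z^2 - ((30*Ste + 9)/Bi)*z + 9*Ste*(1 + 2*Ste))
    (ξmax : ℝ)
    (hξ : ξmax = (Real.sqrt (12*Ste^2 + 36*Ste + 9/Bi^2) - 3/Bi) / (2*(3+Ste))) :
    p₁ ξmax < 0 := by
  have ht : (0:ℝ) < 3 + Ste := by linarith
  have hD : (0:ℝ) ≤ 12*Ste^2 + 36*Ste + 9/Bi^2 := by positivity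
  set s := Real.sqrt (12*Ste^2 + 36*Ste + 9/Bi^2) with hs
  have hs2 : s^2 = 12*Ste^2 + 36*Ste + 9/Bi^2 := Real.sq_sqrt hD
  have hslt : 3/Bi < s := by
    rw [hs]
    rw [show (3:ℝ)/Bi = Real.sqrt ((3/Bi)^2) by
      rw [Real.sqrt_sq (by positivity)]]
    apply Real.sqrt_lt_sqrt (by positivity)
    have : (3/Bi)^2 = 9/Bi^2 := by ring
    nlinarith
  have hξpos : 0 < ξmax := by
    rw [hξ]; apply div_pos (by linarith) (by linarith)
  -- quadratic relation satisfied by ξmax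
  have hE : ξmax * (2*(3+Ste)) = s - 3/Bi := by
    rw [hξ]; field_simp
  have hq4 : 4*(3+Ste) * ((3+Ste)*ξmax^2 + 3/Bi*ξmax - 3*Ste) = 0 := by
    have hE2 : (ξmax * (2*(3+Ste)) + 3/Bi)^2 = s^2 := by rw [hE]; ring
    rw [hs2] at hE2
    field_simp at hE2 ⊢
    nlinarith [hE2]
  have hq : (3+Ste)*ξmax^2 + 3/Bi*ξmax - 3*Ste = 0 := by
    rcases mul_eq_zero.mp hq4 with h | h
    · exfalso; nlinarith
    · exact h
  have hA : 0 < Ste - ξmax/Bi := by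
    have h1 : 0 < (3+Ste) * (ξmax * ξmax) := mul_pos ht (mul_pos hξpos hξpos)
    have h2 : 3/Bi*ξmax = 3*(ξmax/Bi) := by ring
    nlinarith [hq, h1, h2]
  have hB3 : 0 < ξmax/Bi + 3 := by
    have : 0 < ξmax/Bi := div_pos hξpos hBi
    linarith
  have hkey : (3+Ste)^5 * p₁ ξmax =
      -3*(3+Ste)^3*(2*Ste+3)^2*(Ste - ξmax/Bi)*(ξmax/Bi + 3) := by
    rw [hp]
    linear_combination
      ((972 + 2025*Ste + 1782*Ste^2 + 846*Ste^3 + 228*Ste^4 + 33*Ste^5 + 2*Ste^6)*ξmax^2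
        + (729 + 1053*Ste + 567*Ste^2 + 135*Ste^3 + 12*Ste^4)*(ξmax/Bi)
        + (-1458 - 4374*Ste - 4779*Ste^2 - 2565*Ste^3 - 729*Ste^4 - 105*Ste^5 - 6*Ste^6)) * hq
  have hneg : (3+Ste)^5 * p₁ ξmax < 0 := by
    rw [hkey]
    have h1 : 0 < (2*Ste+3)^2 := by positivity
    have h2 : 0 < (3+Ste)^3 := by positivity
    nlinarith [mul_pos hA hB3, mul_pos h1 h2]
  nlinarith [pow_pos ht 5, hneg]
end

section
/- For all Ste > 0 and Bi > 0, the polynomial p₁(z) = (12 + 9·Ste + 2·Ste²)z⁴ + ((21 + 6·Ste)/Bi)z³ + (12/Bi² − 42·Ste − 12·Ste² − 18)z² − ((30·Ste + 9)/Bi)z + 9·Ste(1 + 2·Ste) has exactly one root in the open interval (ξ_min, ξ_max), where ξ_min = (√(4·Ste² + 8·Ste + 1/Bi²) − 1/Bi)/(2(2+Ste)) and ξ_max = (√(12·Ste² + 36·Ste + 9/Bi²) − 3/Bi)/(2(3+Ste)). -/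
set_option maxHeartbeats 1000000

/-- The sign of the derivative polynomial, in variables t = z², w = z/Bi. -/
lemma g_neg_aux (S t w : ℝ) (hS : 0 < S) (ht : 0 < t) (hw : 0 < w)
    (hL : S - (2+S)*t ≤ w) (hU : 3*w ≤ 3*S - (3+S)*t) :
    (48+36*S+8*S^2)*t^2 + 3*(21+6*S)*t*w + 24*w^2
      - (84*S+24*S^2+36)*t - (30*S+9)*w < 0 := by
  have htop : (3+S)*t < 3*S := by nlinarith
  have hgU9 : t^2*(42*S^2+117*S+81) - t*(108*S^2+324*S+243) - (54*S^2+81*S) < 0 := by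
    nlinarith [mul_pos hS ht, mul_pos (mul_pos hS ht) ht,
      mul_pos hS (sub_pos.mpr htop), mul_pos (mul_pos hS (sub_pos.mpr htop)) ht,
      mul_pos (mul_pos (mul_pos hS (sub_pos.mpr htop)) ht) hS,
      mul_pos (mul_pos hS ht) hS, sq_nonneg (2*S+3), sq_nonneg S,
      mul_pos (mul_pos (mul_pos hS ht) hS) hS,
      mul_pos (mul_pos (mul_pos hS (sub_pos.mpr htop)) hS) hS,
      mul_pos (mul_pos (mul_pos (mul_pos hS (sub_pos.mpr htop)) ht) hS) hS]
  rcases le_or_gt ((30*S+9) - 3*(21+6*S)*t) (48*w) with hc | hc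
  · have h1 : 0 ≤ (3*S - (3+S)*t) - 3*w := by linarith
    have h2 : 0 ≤ 9*(21+6*S)*t - 3*(30*S+9) + 24*(3*S - (3+S)*t) + 72*w := by linarith
    nlinarith [mul_nonneg h1 h2, hgU9]
  · rcases le_or_gt (S - (2+S)*t) 0 with hL0 | hL0
    · have hg0 : (48+36*S+8*S^2)*t^2 - (84*S+24*S^2+36)*t < 0 := by
        nlinarith [mul_pos ht hS, mul_pos (mul_pos ht hS) hS,
          mul_pos (mul_pos ht ht) hS, mul_pos (mul_pos (mul_pos ht ht) hS) hS]
      have h2 : 0 ≤ (30*S+9) - 3*(21+6*S)*t - 24*(w + 0) := by linarith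
      nlinarith [mul_nonneg hw.le h2, hg0]
    · have hgL : t^2*(14*S^2+33*S+18) - t*(24*S^2+48*S+18) - (6*S^2+9*S) < 0 := by
        nlinarith [mul_pos ht hS, mul_pos (mul_pos ht hS) hS,
          mul_nonneg (mul_nonneg hL0.le ht.le) hS.le,
          mul_nonneg (mul_nonneg (mul_nonneg hL0.le ht.le) hS.le) hS.le,
          mul_nonneg (mul_nonneg hL0.le ht.le) ht.le]
      have hwL : 0 ≤ w - (S - (2+S)*t) := by linarith
      have h2 : 0 ≤ (30*S+9) - 3*(21+6*S)*t - 24*(w + (S - (2+S)*t)) := by nlinarith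
      nlinarith [mul_nonneg hwL h2, hgL]

theorem stmt_3 (Ste Bi : ℝ) (hSte : 0 < Ste) (hBi : 0 < Bi)
    (p₁ : ℝ → ℝ)
    (hp : ∀ z, p₁ z = (12 + 9*Ste + 2*Ste^2)*z^4 + ((21 + 6*Ste)/Bi)*z^3 +
      (12/Bi^2 - 42*Ste - 12*Ste^2 - 18)*z^2 - ((30*Ste + 9)/Bi)*z + 9*Ste*(1 + 2*Ste))
    (ξmin ξmax : ℝ)
    (hξmin : ξmin = (Real.sqrt (4*Ste^2 + 8*Ste + 1/Bi^2) - 1/Bi) / (2*(2+Ste)))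
    (hξmax : ξmax = (Real.sqrt (12*Ste^2 + 36*Ste + 9/Bi^2) - 3/Bi) / (2*(3+Ste))) :
    ∃! z, z ∈ Set.Ioo ξmin ξmax ∧ p₁ z = 0 := by
  have hS : 0 < Ste := hSte
  have hBi' : Bi ≠ 0 := ne_of_gt hBi
  have hb : 0 < 1/Bi := by positivity
  have h2S : (0:ℝ) < 2 + Ste := by linarith
  have h3S : (0:ℝ) < 3 + Ste := by linarith
  -- quadratic characterization of ξmin : (2+Ste)ξ² + ξ/Bi = Ste
  have hr1 : Real.sqrt (4*Ste^2 + 8*Ste + 1/Bi^2) ^ 2 = 4*Ste^2 + 8*Ste + 1/Bi^2 :=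
    Real.sq_sqrt (by positivity)
  have hr1pos : 1/Bi < Real.sqrt (4*Ste^2 + 8*Ste + 1/Bi^2) := by
    rw [show (1:ℝ)/Bi = Real.sqrt ((1/Bi)^2) from (Real.sqrt_sq hb.le).symm]
    apply Real.sqrt_lt_sqrt (by positivity)
    have heq : (1/Bi)^2 = 1/Bi^2 := by rw [div_pow]; norm_num
    nlinarith [heq, mul_pos hS hS]
  have e1 : 2*(2+Ste)*ξmin + 1/Bi = Real.sqrt (4*Ste^2 + 8*Ste + 1/Bi^2) := by
    rw [hξmin]; field_simp; ring
  have hξmin_pos : 0 < ξmin := by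
    rw [hξmin]; exact div_pos (by linarith) (by linarith)
  have key1 : (2+Ste)*ξmin^2 + ξmin/Bi = Ste := by
    have h2 : (2*(2+Ste)*ξmin + 1/Bi)^2 = 4*Ste^2 + 8*Ste + 1/Bi^2 := by rw [e1]; exact hr1
    have h3 : 4*(2+Ste)*((2+Ste)*ξmin^2 + ξmin/Bi - Ste) = 0 := by linear_combination h2
    have h4 := mul_eq_zero.mp h3
    rcases h4 with h | h
    · exfalso; linarith
    · linarith
  -- quadratic characterization of ξmax : (3+Ste)ξ² + 3ξ/Bi = 3Ste
  have hr2 : Real.sqrt (12*Ste^2 + 36*Ste + 9/Bi^2) ^ 2 = 12*Ste^2 + 36*Ste + 9/Bi^2 :=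
    Real.sq_sqrt (by positivity)
  have hr2pos : 3/Bi < Real.sqrt (12*Ste^2 + 36*Ste + 9/Bi^2) := by
    rw [show (3:ℝ)/Bi = Real.sqrt ((3/Bi)^2) from (Real.sqrt_sq (by positivity)).symm]
    apply Real.sqrt_lt_sqrt (by positivity)
    have : (3/Bi)^2 = 9/Bi^2 := by ring
    nlinarith
  have e2 : 2*(3+Ste)*ξmax + 3/Bi = Real.sqrt (12*Ste^2 + 36*Ste + 9/Bi^2) := by
    rw [hξmax]; field_simp; ring
  have hξmax_pos : 0 < ξmax := by
    rw [hξmax]; exact div_pos (by linarith) (by linarith)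
  have key2 : (3+Ste)*ξmax^2 + 3*(ξmax/Bi) = 3*Ste := by
    have h2 : (2*(3+Ste)*ξmax + 3/Bi)^2 = 12*Ste^2 + 36*Ste + 9/Bi^2 := by rw [e2]; exact hr2
    have h3 : 4*(3+Ste)*((3+Ste)*ξmax^2 + 3*(ξmax/Bi) - 3*Ste) = 0 := by linear_combination h2
    have h4 := mul_eq_zero.mp h3
    rcases h4 with h | h
    · exfalso; linarith
    · linarith
  -- ξmin < ξmax
  have hlt : ξmin < ξmax := by
    by_contra hcon
    push_neg at hcon
    have hq : (3+Ste)*ξmin^2 + 3*(ξmin/Bi) - 3*Ste = -(3+2*Ste)*ξmin^2 := by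
      linear_combination 3*key1
    have hmono : (3+Ste)*ξmax^2 + 3*(ξmax/Bi) ≤ (3+Ste)*ξmin^2 + 3*(ξmin/Bi) := by
      have h1 : ξmax^2 ≤ ξmin^2 := by nlinarith
      have h2 : ξmax/Bi ≤ ξmin/Bi := by gcongr
      nlinarith
    nlinarith [sq_nonneg ξmin, mul_pos hξmin_pos hξmin_pos]
  -- sign at the endpoints
  have hpmin : 0 < p₁ ξmin := by
    have : p₁ ξmin = 2*(2*Ste+3)^2*ξmin^4 := by
      rw [hp]
      linear_combination ((21+6*Ste)*ξmin^2 + 12*(ξmin/Bi + Ste - (2+Ste)*ξmin^2)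
        - (30*Ste+9)) * key1
    rw [this]; positivity
  have hξmax_sq : ξmax^2 < 3 := by nlinarith [div_pos hξmax_pos hBi, key2, h3S]
  have hpmax : p₁ ξmax < 0 := by
    have : p₁ ξmax = (2*Ste+3)^2*ξmax^2*(ξmax^2-3)/3 := by
      rw [hp]
      linear_combination (((21+6*Ste)*ξmax^2 + 12*(ξmax/Bi + Ste - (3+Ste)*ξmax^2/3)
        - (30*Ste+9))/3) * key2
    rw [this]
    have h1 : (0:ℝ) < (2*Ste+3)^2*ξmax^2 := by positivity
    have h2 : ξmax^2 - 3 < 0 := by linarith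
    nlinarith
  -- continuity
  have hpc : Continuous p₁ := by
    have : p₁ = fun z => (12 + 9*Ste + 2*Ste^2)*z^4 + ((21 + 6*Ste)/Bi)*z^3 +
      (12/Bi^2 - 42*Ste - 12*Ste^2 - 18)*z^2 - ((30*Ste + 9)/Bi)*z + 9*Ste*(1 + 2*Ste) :=
      funext hp
    rw [this]; continuity
  -- strict antitonicity on [ξmin, ξmax]
  have hanti : StrictAntiOn p₁ (Set.Icc ξmin ξmax) := by
    have hderiv : ∀ x, HasDerivAt p₁
        (4*(12 + 9*Ste + 2*Ste^2)*x^3 + 3*((21 + 6*Ste)/Bi)*x^2 +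
          2*(12/Bi^2 - 42*Ste - 12*Ste^2 - 18)*x - (30*Ste + 9)/Bi) x := by
      intro x
      have hfun : p₁ = fun z => (12 + 9*Ste + 2*Ste^2)*z^4 + ((21 + 6*Ste)/Bi)*z^3 +
          (12/Bi^2 - 42*Ste - 12*Ste^2 - 18)*z^2 - ((30*Ste + 9)/Bi)*z + 9*Ste*(1 + 2*Ste) :=
        funext hp
      rw [hfun]
      have h4 := (hasDerivAt_pow 4 x).const_mul (12 + 9*Ste + 2*Ste^2)
      have h3 := (hasDerivAt_pow 3 x).const_mul ((21 + 6*Ste)/Bi)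
      have h2 := (hasDerivAt_pow 2 x).const_mul (12/Bi^2 - 42*Ste - 12*Ste^2 - 18)
      have h1 := (hasDerivAt_id x).const_mul ((30*Ste + 9)/Bi)
      have := (((h4.add h3).add h2).sub h1).add_const (9*Ste*(1 + 2*Ste))
      refine this.congr_deriv ?_
      push_cast
      ring
    apply strictAntiOn_of_deriv_neg (convex_Icc _ _) hpc.continuousOn
    intro x hx
    rw [interior_Icc] at hx
    rw [(hderiv x).deriv]
    have hx1 : ξmin < x := hx.1
    have hx2 : x < ξmax := hx.2
    have hxpos : 0 < x := lt_trans hξmin_pos hx1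
    -- constraints on x
    have hcL : Ste - (2+Ste)*x^2 ≤ x/Bi := by
      have A : (2+Ste)*ξmin^2 ≤ (2+Ste)*x^2 :=
        mul_le_mul_of_nonneg_left (pow_le_pow_left₀ hξmin_pos.le hx1.le 2) h2S.le
      have B : ξmin/Bi ≤ x/Bi := by gcongr
      linarith
    have hcU : 3*(x/Bi) ≤ 3*Ste - (3+Ste)*x^2 := by
      have A : (3+Ste)*x^2 ≤ (3+Ste)*ξmax^2 :=
        mul_le_mul_of_nonneg_left (pow_le_pow_left₀ hxpos.le hx2.le 2) h3S.le
      have B : x/Bi ≤ ξmax/Bi := by gcongr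
      linarith
    have hg := g_neg_aux Ste (x^2) (x/Bi) hS (by positivity) (by positivity) hcL hcU
    -- x * deriv = g
    have hrel : x * (4*(12 + 9*Ste + 2*Ste^2)*x^3 + 3*((21 + 6*Ste)/Bi)*x^2 +
        2*(12/Bi^2 - 42*Ste - 12*Ste^2 - 18)*x - (30*Ste + 9)/Bi) =
        (48+36*Ste+8*Ste^2)*(x^2)^2 + 3*(21+6*Ste)*(x^2)*(x/Bi) + 24*(x/Bi)^2
          - (84*Ste+24*Ste^2+36)*(x^2) - (30*Ste+9)*(x/Bi) := by
      field_simp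
      ring
    nlinarith [hg, hrel, hxpos]
  -- existence via IVT
  have hsub : Set.Ioo (p₁ ξmax) (p₁ ξmin) ⊆ p₁ '' Set.Ioo ξmin ξmax :=
    intermediate_value_Ioo' (le_of_lt hlt) hpc.continuousOn
  obtain ⟨z, hz, hz0⟩ := hsub ⟨hpmax, hpmin⟩
  refine ⟨z, ⟨hz, hz0⟩, ?_⟩
  rintro y ⟨hy, hy0⟩
  have : y ∈ Set.Icc ξmin ξmax := Set.mem_Icc_of_Ioo hy
  have hz' : z ∈ Set.Icc ξmin ξmax := Set.mem_Icc_of_Ioo hz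
  exact hanti.injOn this hz' (by rw [hy0, hz0])
end

section
/- For all Ste > 0 and Bi > 0, the polynomial p₂(z) = z⁴ + (2/Bi)z³ + (6 + Ste)z² + (3/Bi)z − 3·Ste has exactly one positive root, and this root lies in the open interval (ξ_min, ξ_max), where ξ_min = (√(4·Ste² + 8·Ste + 1/Bi²) − 1/Bi)/(2(2+Ste)) and ξ_max = (√(12·Ste² + 36·Ste + 9/Bi²) − 3/Bi)/(2(3+Ste)). -/
theorem stmt_4 (Ste Bi : ℝ) (hSte : 0 < Ste) (hBi : 0 < Bi)
    (p₂ : ℝ → ℝ)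
    (hp : ∀ z, p₂ z = z^4 + (2/Bi)*z^3 + (6 + Ste)*z^2 + (3/Bi)*z - 3*Ste)
    (ξmin ξmax : ℝ)
    (hξmin : ξmin = (Real.sqrt (4*Ste^2 + 8*Ste + 1/Bi^2) - 1/Bi) / (2*(2+Ste)))
    (hξmax : ξmax = (Real.sqrt (12*Ste^2 + 36*Ste + 9/Bi^2) - 3/Bi) / (2*(3+Ste))) :
    (∃! z, 0 < z ∧ p₂ z = 0) ∧
    (∀ z, 0 < z → p₂ z = 0 → z ∈ Set.Ioo ξmin ξmax) := by
  -- strict monotonicity on [0, ∞)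
  have hmono : ∀ a b : ℝ, 0 ≤ a → a < b → p₂ a < p₂ b := by
    intro a b ha hab
    rw [hp, hp]
    have h0b : (0:ℝ) ≤ b := le_of_lt (lt_of_le_of_lt ha hab)
    have h2 : a^2 ≤ b^2 := by nlinarith
    have h3 : a^3 ≤ b^3 := by nlinarith
    have h4 : a^4 ≤ b^4 := by nlinarith [mul_le_mul h2 h2 (sq_nonneg a) (sq_nonneg b)]
    have hbi2 : (0:ℝ) < 2/Bi := by positivity
    have hbi3 : (0:ℝ) < 3/Bi := by positivity
    nlinarith [mul_le_mul_of_nonneg_left h3 (le_of_lt hbi2),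
      mul_lt_mul_of_pos_left hab hbi3, mul_le_mul_of_nonneg_left h2
        (by linarith : (0:ℝ) ≤ 6 + Ste)]
  have hBi2 : Bi^2 > 0 := by positivity
  -- ξmin facts
  have hD1 : (0:ℝ) ≤ 4*Ste^2 + 8*Ste + 1/Bi^2 := by positivity
  have hs1 := Real.sq_sqrt hD1
  have hs1nn := Real.sqrt_nonneg (4*Ste^2 + 8*Ste + 1/Bi^2)
  set s1 := Real.sqrt (4*Ste^2 + 8*Ste + 1/Bi^2) with hs1def
  have hs1gt : 1/Bi < s1 := by
    have h1 : (1/Bi)^2 < s1^2 := by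
      rw [hs1, div_pow, one_pow]; nlinarith
    exact lt_of_pow_lt_pow_left₀ 2 hs1nn h1
  have hminpos : 0 < ξmin := by
    rw [hξmin]; apply div_pos (by linarith) (by linarith)
  have hmineq : (2+Ste)*ξmin^2 + ξmin/Bi = Ste := by
    have hne : (2*(2+Ste) : ℝ) ≠ 0 := by positivity
    have hlin : 2*(2+Ste)*ξmin = s1 - 1/Bi := by
      rw [hξmin]; field_simp
    have hsq : (2*(2+Ste)*ξmin + 1/Bi)^2 = 4*Ste^2 + 8*Ste + 1/Bi^2 := by
      rw [hlin]
      have e : s1 - 1/Bi + 1/Bi = s1 := by ring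
      rw [e]; exact hs1
    have key : 4*(2+Ste)*((2+Ste)*ξmin^2 + ξmin/Bi) = 4*(2+Ste)*Ste := by
      linear_combination hsq
    have h2 : ((4:ℝ)*(2+Ste)) ≠ 0 := by positivity
    exact mul_left_cancel₀ h2 key
  -- ξmax facts
  have hD2 : (0:ℝ) ≤ 12*Ste^2 + 36*Ste + 9/Bi^2 := by positivity
  have hs2 := Real.sq_sqrt hD2
  have hs2nn := Real.sqrt_nonneg (12*Ste^2 + 36*Ste + 9/Bi^2)
  set s2 := Real.sqrt (12*Ste^2 + 36*Ste + 9/Bi^2) with hs2def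
  have hs2gt : 3/Bi < s2 := by
    have h1 : (3/Bi)^2 < s2^2 := by
      rw [hs2, div_pow]; nlinarith
    exact lt_of_pow_lt_pow_left₀ 2 hs2nn h1
  have hmaxpos : 0 < ξmax := by
    rw [hξmax]; apply div_pos (by linarith) (by linarith)
  have hmaxeq : (3+Ste)*ξmax^2 + 3*ξmax/Bi = 3*Ste := by
    have hlin : 2*(3+Ste)*ξmax = s2 - 3/Bi := by
      rw [hξmax]; field_simp
    have hsq : (2*(3+Ste)*ξmax + 3/Bi)^2 = 12*Ste^2 + 36*Ste + 9/Bi^2 := by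
      rw [hlin]
      have e : s2 - 3/Bi + 3/Bi = s2 := by ring
      rw [e]; exact hs2
    have key : 4*(3+Ste)*((3+Ste)*ξmax^2 + 3*ξmax/Bi) = 4*(3+Ste)*(3*Ste) := by
      linear_combination hsq
    have h2 : ((4:ℝ)*(3+Ste)) ≠ 0 := by positivity
    exact mul_left_cancel₀ h2 key
  -- sign at endpoints
  have hpmin : p₂ ξmin < 0 := by
    have e : p₂ ξmin = -(3+2*Ste)*ξmin^4 := by
      rw [hp]; linear_combination (2*ξmin^2 + 3) * hmineq
    rw [e]
    have : 0 < (3+2*Ste)*ξmin^4 := by positivity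
    linarith
  have hpmax : 0 < p₂ ξmax := by
    have e : p₂ ξmax = ξmax^4 + (2/Bi)*ξmax^3 + 3*ξmax^2 := by
      rw [hp]; linear_combination hmaxeq
    rw [e]; positivity
  -- existence via IVT
  have hcont : ContinuousOn p₂ (Set.Icc 0 ξmax) := by
    have he : p₂ = fun z => z^4 + (2/Bi)*z^3 + (6 + Ste)*z^2 + (3/Bi)*z - 3*Ste :=
      funext hp
    rw [he]; fun_prop
  have hp0 : p₂ 0 < 0 := by rw [hp]; nlinarith
  have hIVT := intermediate_value_Ioo (le_of_lt hmaxpos) hcont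
  have h0mem : (0:ℝ) ∈ Set.Ioo (p₂ 0) (p₂ ξmax) := ⟨hp0, hpmax⟩
  obtain ⟨z₀, hz₀mem, hz₀⟩ := hIVT h0mem
  -- any positive root lies in (ξmin, ξmax)
  have hloc : ∀ z, 0 < z → p₂ z = 0 → ξmin < z ∧ z < ξmax := by
    intro z hz hzroot
    constructor
    · by_contra h
      push_neg at h
      rcases lt_or_eq_of_le h with h' | h'
      · have := hmono z ξmin (le_of_lt hz) h'
        linarith
      · rw [h'] at hzroot; linarith
    · by_contra h
      push_neg at h
      rcases lt_or_eq_of_le h with h' | h'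
      · have := hmono ξmax z (le_of_lt hmaxpos) h'
        linarith
      · rw [← h'] at hzroot; linarith
  refine ⟨⟨z₀, ⟨hz₀mem.1, hz₀⟩, ?_⟩, fun z hz hroot => Set.mem_Ioo.2 (hloc z hz hroot)⟩
  rintro y ⟨hy, hyroot⟩
  by_contra hne
  rcases lt_or_gt_of_ne hne with h | h
  · have := hmono y z₀ (le_of_lt hy) h
    rw [hyroot, hz₀] at this; exact lt_irrefl 0 this
  · have := hmono z₀ y (le_of_lt hz₀mem.1) h
    rw [hyroot, hz₀] at this; exact lt_irrefl 0 this
end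

section
/- For all Ste > 0 and Bi > 0, the polynomial p₂(z) = z⁴ + (2/Bi)z³ + (6 + Ste)z² + (3/Bi)z − 3·Ste satisfies p₂(ξ_min) < 0, where ξ_min = (√(4·Ste² + 8·Ste + 1/Bi²) − 1/Bi)/(2(2+Ste)). -/
theorem stmt_5 (Ste Bi : ℝ) (hSte : 0 < Ste) (hBi : 0 < Bi)
    (p₂ : ℝ → ℝ)
    (hp : ∀ z, p₂ z = z^4 + (2/Bi)*z^3 + (6 + Ste)*z^2 + (3/Bi)*z - 3*Ste)
    (ξmin : ℝ)
    (hξ : ξmin = (Real.sqrt (4*Ste^2 + 8*Ste + 1/Bi^2) - 1/Bi) / (2*(2+Ste))) :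
    p₂ ξmin < 0 := by
  set u : ℝ := 1 / Bi with hu_def
  have hu : 0 < u := by positivity
  set s : ℝ := Real.sqrt (4*Ste^2 + 8*Ste + 1/Bi^2) with hs_def
  have hDpos : (0:ℝ) < 4*Ste^2 + 8*Ste + 1/Bi^2 := by positivity
  have hs2 : s^2 = 4*Ste^2 + 8*Ste + 1/Bi^2 := Real.sq_sqrt hDpos.le
  have hsnn : 0 ≤ s := Real.sqrt_nonneg _
  have hs2' : s^2 = u^2 + 4*(2+Ste)*Ste := by
    rw [hu_def]; linear_combination hs2
  have hp' : p₂ ξmin = ξmin^4 + 2*u*ξmin^3 + (6 + Ste)*ξmin^2 + 3*u*ξmin - 3*Ste := by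
    rw [hp, hu_def]; ring
  clear_value s u
  clear hp hs2 hs_def hu_def hDpos
  have hk : (0:ℝ) < 2 + Ste := by linarith
  have hsu : u < s := by nlinarith
  have hξpos : 0 < ξmin := by
    rw [hξ]
    apply div_pos (by linarith) (by linarith)
  have heq0 : ξmin * (2*(2+Ste)) = s - u := by
    rw [hξ]; field_simp
  have h4k : (4*(2+Ste)) ≠ 0 := by positivity
  have hq0 : (4*(2+Ste)) * ((2+Ste)*ξmin^2 + u*ξmin - Ste) = 0 := by
    linear_combination (2*(2+Ste)*ξmin + s + u) * heq0 + hs2'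
  have hq : (2+Ste)*ξmin^2 + u*ξmin - Ste = 0 :=
    (mul_eq_zero.mp hq0).resolve_left h4k
  set D : ℝ := u * (2*(2+Ste)*Ste + u^2) with hD_def
  set N : ℝ := Ste * ((2+Ste)*Ste + u^2) with hN_def
  have hDp : 0 < D := by rw [hD_def]; positivity
  have hNp : 0 < N := by rw [hN_def]; positivity
  have hprod : (D*ξmin - N) * ((2+Ste)*D*ξmin + (2+Ste)*N + u*D) = -((2+Ste)^3 * Ste^4) := by
    rw [hD_def, hN_def]
    linear_combination (u * (2*(2+Ste)*Ste + u^2))^2 * hq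
  have hfac : 0 < (2+Ste)*D*ξmin + (2+Ste)*N + u*D := by positivity
  have hlt : D*ξmin - N < 0 := by
    nlinarith [hprod, hfac, pow_pos hk 3, pow_pos hSte 4]
  have heq : p₂ ξmin * (2+Ste)^3 = (2*(2+Ste) - 1) * (D*ξmin - N) := by
    rw [hp', hD_def, hN_def]
    linear_combination ((2+Ste)^2*ξmin^2 + u*(2+Ste)*(2*(2+Ste)-1)*ξmin + ((2+Ste)^3 + 5*(2+Ste)^2 - 2*(2+Ste) - u^2*(2*(2+Ste)-1))) * hq
  have h2k : (0:ℝ) < 2*(2+Ste) - 1 := by linarith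
  have hneg : p₂ ξmin * (2+Ste)^3 < 0 := by
    rw [heq]; exact mul_neg_of_pos_of_neg h2k hlt
  nlinarith [hneg, pow_pos hk 3]
end

section
/- For all Ste > 0 and Bi > 0, the polynomial p₂(z) = z⁴ + (2/Bi)z³ + (6 + Ste)z² + (3/Bi)z − 3·Ste satisfies p₂(ξ_max) > 0, where ξ_max = (√(12·Ste² + 36·Ste + 9/Bi²) − 3/Bi)/(2(3+Ste)). -/
theorem stmt_6 (Ste Bi : ℝ) (hSte : 0 < Ste) (hBi : 0 < Bi)
    (p₂ : ℝ → ℝ)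
    (hp : ∀ z, p₂ z = z^4 + (2/Bi)*z^3 + (6 + Ste)*z^2 + (3/Bi)*z - 3*Ste)
    (ξmax : ℝ)
    (hξ : ξmax = (Real.sqrt (12*Ste^2 + 36*Ste + 9/Bi^2) - 3/Bi) / (2*(3+Ste))) :
    0 < p₂ ξmax := by
  set s := Real.sqrt (12*Ste^2 + 36*Ste + 9/Bi^2) with hs
  have harg : (0:ℝ) ≤ 12*Ste^2 + 36*Ste + 9/Bi^2 := by positivity
  have hs2 : s^2 = 12*Ste^2 + 36*Ste + 9/Bi^2 := Real.sq_sqrt harg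
  have hsnn : 0 ≤ s := Real.sqrt_nonneg _
  have hsgt : 3/Bi < s := by
    by_contra h
    push_neg at h
    have h2 : s^2 ≤ (3/Bi)^2 := by nlinarith [hsnn]
    have h3 : (3/Bi)^2 = 9/Bi^2 := by rw [div_pow]; norm_num
    nlinarith [hSte]
  have hden : (0:ℝ) < 2*(3+Ste) := by linarith
  have hξpos : 0 < ξmax := by
    rw [hξ]; exact div_pos (by linarith) hden
  have hquad : (3+Ste)*ξmax^2 + (3/Bi)*ξmax - 3*Ste = 0 := by
    rw [hξ]
    have hBi' : Bi ≠ 0 := ne_of_gt hBi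
    have hs2' : s^2*Bi^2 = (12*Ste^2+36*Ste)*Bi^2 + 9 := by
      rw [hs2]; field_simp
    field_simp
    linear_combination hs2'
  rw [hp]
  have h1 : 0 < ξmax^4 := by positivity
  have h2 : 0 < (2/Bi)*ξmax^3 := by positivity
  have h3 : 0 < 3*ξmax^2 := by positivity
  nlinarith [hquad, h1, h2, h3]
end

section
/- For all Ste > 0 and Bi > 0, the polynomial p₄(z) = Ste·z⁴ − (1/Bi)z³ − 6(1 + Ste)z² − (3/Bi)z + 9·Ste has exactly one root in the open interval (0, √3). -/
theorem stmt_8 (Ste Bi : ℝ) (hSte : 0 < Ste) (hBi : 0 < Bi)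
    (p₄ : ℝ → ℝ)
    (hp : ∀ z, p₄ z = Ste*z^4 - (1/Bi)*z^3 - 6*(1 + Ste)*z^2 - (3/Bi)*z + 9*Ste) :
    ∃! z, z ∈ Set.Ioo (0:ℝ) (Real.sqrt 3) ∧ p₄ z = 0 := by
  have hfun : p₄ = fun z => Ste*z^4 - (1/Bi)*z^3 - 6*(1 + Ste)*z^2 - (3/Bi)*z + 9*Ste :=
    funext hp
  subst hfun
  set f : ℝ → ℝ := fun z => Ste*z^4 - (1/Bi)*z^3 - 6*(1 + Ste)*z^2 - (3/Bi)*z + 9*Ste with hf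
  set s : ℝ := Real.sqrt 3 with hsdef
  have hs2 : s^2 = 3 := Real.sq_sqrt (by norm_num)
  have hs0 : 0 < s := Real.sqrt_pos.mpr (by norm_num)
  -- derivative
  have hder : ∀ z : ℝ, HasDerivAt f (4*Ste*z^3 - (3/Bi)*z^2 - 12*(1+Ste)*z - 3/Bi) z := by
    intro z
    have h1 : HasDerivAt (fun z : ℝ => Ste*z^4 - (1/Bi)*z^3 - 6*(1 + Ste)*z^2 - (3/Bi)*z + 9*Ste)
        (Ste*(4*z^3) - (1/Bi)*(3*z^2) - 6*(1+Ste)*(2*z) - (3/Bi)*1 + 0) z := by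
      have h4 : HasDerivAt (fun z : ℝ => z^4) ((4:ℕ)*z^3) z := by
        simpa using hasDerivAt_pow 4 z
      have h3 : HasDerivAt (fun z : ℝ => z^3) ((3:ℕ)*z^2) z := by
        simpa using hasDerivAt_pow 3 z
      have h2 : HasDerivAt (fun z : ℝ => z^2) ((2:ℕ)*z^1) z := by
        simpa using hasDerivAt_pow 2 z
      have := ((((h4.const_mul Ste).sub (h3.const_mul (1/Bi))).sub
          (h2.const_mul (6*(1+Ste)))).sub ((hasDerivAt_id z).const_mul (3/Bi))).add_const (9*Ste)
      refine this.congr_deriv ?_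
      push_cast
      ring
    convert h1 using 1
    ring
  have hcont : Continuous f := by
    continuity
  -- strictly decreasing on [0, s]
  have hanti : StrictAntiOn f (Set.Icc 0 s) := by
    apply strictAntiOn_of_deriv_neg (convex_Icc 0 s) hcont.continuousOn
    intro z hz
    rw [interior_Icc] at hz
    rw [(hder z).deriv]
    have hz0 : 0 < z := hz.1
    have hz2 : z^2 < 3 := by
      nlinarith [hz.2, hs2, hs0]
    have hBi' : 0 < 3/Bi := by positivity
    nlinarith [mul_pos hSte hz0, mul_pos (mul_pos hSte hz0) hz0,
      sq_nonneg z, mul_pos hBi' (mul_pos hz0 hz0)]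
  have hf0 : f 0 = 9*Ste := by simp [hf]
  have hfs : f s = -18 - 6*s/Bi := by
    have h3 : s^3 = 3*s := by nlinarith [hs2]
    have h4 : s^4 = 9 := by nlinarith [hs2]
    simp only [hf]
    rw [h3, h4]
    field_simp
    linear_combination (-6*Bi*(Ste+1))*hs2
  have hfs_neg : f s < 0 := by
    rw [hfs]
    have : 0 < 6*s/Bi := by positivity
    linarith
  have hf0_pos : 0 < f 0 := by rw [hf0]; positivity
  -- existence by IVT (decreasing direction)
  have hivt : Set.Ioo (f s) (f 0) ⊆ f '' Set.Ioo 0 s :=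
    intermediate_value_Ioo' (le_of_lt hs0) hcont.continuousOn
  obtain ⟨z, hzmem, hzval⟩ := hivt ⟨hfs_neg, hf0_pos⟩
  refine ⟨z, ⟨hzmem, hzval⟩, ?_⟩
  rintro y ⟨hymem, hyval⟩
  by_contra hne
  have hzI : z ∈ Set.Icc (0:ℝ) s := ⟨le_of_lt hzmem.1, le_of_lt hzmem.2⟩
  have hyI : y ∈ Set.Icc (0:ℝ) s := ⟨le_of_lt hymem.1, le_of_lt hymem.2⟩
  rcases lt_or_gt_of_ne hne with h | h
  · have := hanti hyI hzI h
    rw [hyval, hzval] at this; exact lt_irrefl 0 this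
  · have := hanti hzI hyI h
    rw [hyval, hzval] at this; exact lt_irrefl 0 this
end

section
/- For every Ste > 0, the equation z·exp(z²)·erf(z) = Ste/√π has a unique positive solution z. -/
noncomputable def erf (z : ℝ) : ℝ :=
  (2 / Real.sqrt Real.pi) * ∫ t in (0:ℝ)..z, Real.exp (-t^2)

lemma erf_cont : Continuous erf := by
  unfold erf
  exact continuous_const.mul (intervalIntegral.continuous_primitive
    (fun a b => (Real.continuous_exp.comp (by continuity)).intervalIntegrable a b) 0)

lemma erf_strictMono : StrictMono erf := by
  intro a b hab
  unfold erf
  have hc : ∀ x y : ℝ, IntervalIntegrable (fun t => Real.exp (-t^2)) MeasureTheory.volume x y :=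
    fun x y => (Real.continuous_exp.comp (by continuity)).intervalIntegrable x y
  have hsplit : (∫ t in (0:ℝ)..b, Real.exp (-t^2))
      = (∫ t in (0:ℝ)..a, Real.exp (-t^2)) + ∫ t in a..b, Real.exp (-t^2) :=
    (intervalIntegral.integral_add_adjacent_intervals (hc 0 a) (hc a b)).symm
  have hpos : 0 < ∫ t in a..b, Real.exp (-t^2) :=
    intervalIntegral.intervalIntegral_pos_of_pos (hc a b) (fun t => Real.exp_pos _) hab
  have h2 : (0:ℝ) < 2 / Real.sqrt Real.pi :=
    div_pos two_pos (Real.sqrt_pos.mpr Real.pi_pos)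
  rw [hsplit]
  nlinarith

lemma erf_zero : erf 0 = 0 := by simp [erf]

theorem stmt_9 (Ste : ℝ) (hSte : 0 < Ste) :
    ∃! z : ℝ, 0 < z ∧ z * Real.exp (z^2) * erf z = Ste / Real.sqrt Real.pi := by
  set f : ℝ → ℝ := fun z => z * Real.exp (z^2) * erf z with hf
  have herf_pos : ∀ z : ℝ, 0 < z → 0 < erf z := fun z hz => by
    have := erf_strictMono hz; rwa [erf_zero] at this
  have hmono : StrictMonoOn f (Set.Ici 0) := by
    intro a ha b hb hab
    simp only [hf]
    rcases eq_or_lt_of_le (Set.mem_Ici.mp ha) with h | h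
    · subst h
      simp only [erf_zero, mul_zero, zero_mul]
      exact mul_pos (mul_pos hab (Real.exp_pos _)) (herf_pos b hab)
    · have h1 : a * Real.exp (a^2) < b * Real.exp (b^2) :=
        mul_lt_mul'' hab (Real.exp_lt_exp.mpr (by nlinarith)) h.le (Real.exp_pos _).le
      exact mul_lt_mul'' h1 (erf_strictMono hab) (by positivity) (herf_pos a h).le
  have hcont : Continuous f := by
    apply Continuous.mul _ erf_cont
    exact continuous_id.mul (Real.continuous_exp.comp (by continuity))
  have hπ : (0:ℝ) < Real.sqrt Real.pi := Real.sqrt_pos.mpr Real.pi_pos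
  have he1 : 0 < erf 1 := herf_pos 1 one_pos
  set M : ℝ := max 1 (Ste / (Real.sqrt Real.pi * erf 1)) with hM
  have hM1 : (1:ℝ) ≤ M := le_max_left _ _
  have hMpos : 0 < M := lt_of_lt_of_le one_pos hM1
  have hfM : Ste / Real.sqrt Real.pi ≤ f M := by
    have h2 : Ste / (Real.sqrt Real.pi * erf 1) ≤ M := le_max_right _ _
    have h3 : M * erf 1 ≤ f M := by
      simp only [hf]
      have h4 : erf 1 ≤ erf M := erf_strictMono.monotone hM1
      have h5 : (1:ℝ) ≤ Real.exp (M^2) := Real.one_le_exp (by positivity)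
      have e1 : M * erf 1 ≤ M * erf M := mul_le_mul_of_nonneg_left h4 hMpos.le
      have e2 : M * erf M ≤ M * Real.exp (M^2) * erf M :=
        mul_le_mul_of_nonneg_right (le_mul_of_one_le_right hMpos.le h5) (herf_pos M hMpos).le
      linarith
    have h6 : Ste / Real.sqrt Real.pi ≤ M * erf 1 := by
      rw [div_le_iff₀ (by positivity)] at h2
      rw [div_le_iff₀ hπ]
      nlinarith
    linarith
  have hmem : Ste / Real.sqrt Real.pi ∈ Set.Icc (f 0) (f M) := by
    constructor
    · simp [hf, erf_zero]; positivity
    · exact hfM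
  obtain ⟨z, hz, hzf⟩ := intermediate_value_Icc hMpos.le (hcont.continuousOn) hmem
  have hzpos : 0 < z := by
    by_contra h
    push_neg at h
    have : z = 0 := le_antisymm h hz.1
    rw [this] at hzf
    simp only [hf, erf_zero, mul_zero, zero_mul] at hzf
    have hp : 0 < Ste / Real.sqrt Real.pi := div_pos hSte hπ
    linarith
  refine ⟨z, ⟨hzpos, hzf⟩, ?_⟩
  rintro y ⟨hy, hyf⟩
  exact hmono.injOn (Set.mem_Ici.mpr hy.le) (Set.mem_Ici.mpr hzpos.le)
    (by simp only [hf]; rw [hyf]; exact hzf.symm)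
end

section
/- For every Ste > 0 and Bi > 0, the equation z·exp(z²)·(erf(z) + 1/(Bi·√π)) = Ste/√π has a unique positive solution z. -/
lemma erf_mono : Monotone erf := by
  intro x y hxy
  unfold erf
  apply mul_le_mul_of_nonneg_left _ (by positivity)
  have h1 : (∫ t in (0:ℝ)..x, Real.exp (-t^2)) + ∫ t in x..y, Real.exp (-t^2)
      = ∫ t in (0:ℝ)..y, Real.exp (-t^2) :=
    intervalIntegral.integral_add_adjacent_intervals
      (Continuous.intervalIntegrable (by continuity) 0 x)
      (Continuous.intervalIntegrable (by continuity) x y)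
  have h2 : 0 ≤ ∫ t in x..y, Real.exp (-t^2) :=
    intervalIntegral.integral_nonneg hxy (fun t _ => (Real.exp_pos _).le)
  linarith

lemma erf_nonneg {z : ℝ} (hz : 0 ≤ z) : 0 ≤ erf z := by
  unfold erf
  apply mul_nonneg (by positivity)
  exact intervalIntegral.integral_nonneg hz (fun t _ => (Real.exp_pos _).le)

theorem stmt_10 (Ste Bi : ℝ) (hSte : 0 < Ste) (hBi : 0 < Bi) :
    ∃! z : ℝ, 0 < z ∧
      z * Real.exp (z^2) * (erf z + 1 / (Bi * Real.sqrt Real.pi)) = Ste / Real.sqrt Real.pi := by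
  have hpi : 0 < Real.sqrt Real.pi := Real.sqrt_pos.mpr Real.pi_pos
  set c : ℝ := 1 / (Bi * Real.sqrt Real.pi) with hc
  have hcpos : 0 < c := by positivity
  set K : ℝ := Ste / Real.sqrt Real.pi with hK
  have hKpos : 0 < K := by positivity
  set f : ℝ → ℝ := fun z => z * Real.exp (z^2) * (erf z + c) with hf
  have hmono : StrictMonoOn f (Set.Ici 0) := by
    intro x hx y hy hxy
    have hy' : 0 < y := lt_of_le_of_lt hx hxy
    have h1 : x * Real.exp (x^2) < y * Real.exp (y^2) :=
      mul_lt_mul' hxy.le (Real.exp_lt_exp.mpr (pow_lt_pow_left₀ hxy hx two_ne_zero))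
        (Real.exp_pos _).le hy'
    have h2 : 0 < erf x + c := add_pos_of_nonneg_of_pos (erf_nonneg hx) hcpos
    have h3 : erf x + c ≤ erf y + c := by gcongr; exact erf_mono hxy.le
    calc f x = x * Real.exp (x^2) * (erf x + c) := rfl
      _ < y * Real.exp (y^2) * (erf x + c) := by exact mul_lt_mul_of_pos_right h1 h2
      _ ≤ y * Real.exp (y^2) * (erf y + c) := by
          exact mul_le_mul_of_nonneg_left h3
            (mul_nonneg hy'.le (Real.exp_pos _).le)
  have hcont : Continuous f := by
    apply Continuous.mul
    · exact continuous_id.mul (Real.continuous_exp.comp (by continuity))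
    · exact erf_cont.add continuous_const
  -- existence
  set b : ℝ := K / c with hb
  have hbpos : 0 < b := by positivity
  have hfb : K ≤ f b := by
    have : b * c ≤ f b := by
      have h1 : 1 ≤ Real.exp (b^2) := Real.one_le_exp (by positivity)
      have h2 : c ≤ erf b + c := le_add_of_nonneg_left (erf_nonneg hbpos.le)
      calc b * c = b * 1 * c := by ring
        _ ≤ b * Real.exp (b^2) * (erf b + c) := by
            apply mul_le_mul _ h2 hcpos.le (by positivity)
            exact mul_le_mul_of_nonneg_left h1 hbpos.le
    have : K ≤ b * c → K ≤ f b := fun h => h.trans this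
    apply this
    rw [hb, div_mul_cancel₀ _ hcpos.ne']
  have hf0 : f 0 = 0 := by simp [hf]
  have hIVT := intermediate_value_Icc hbpos.le (hcont.continuousOn (s := Set.Icc 0 b))
  have hKmem : K ∈ Set.Icc (f 0) (f b) := by
    constructor
    · rw [hf0]; exact hKpos.le
    · exact hfb
  obtain ⟨z, hzmem, hzeq⟩ := hIVT hKmem
  have hzpos : 0 < z := by
    rcases lt_or_eq_of_le hzmem.1 with h | h
    · exact h
    · exfalso; rw [← h, hf0] at hzeq; exact hKpos.ne' (hzeq ▸ rfl)
  refine ⟨z, ⟨hzpos, hzeq⟩, ?_⟩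
  rintro y ⟨hypos, hyeq⟩
  have : f y = f z := hyeq.trans hzeq.symm
  exact hmono.injOn (Set.mem_Ici.mpr hypos.le) (Set.mem_Ici.mpr hzpos.le) this
end

section
/- For every Ste > 0, the number ξ₁∞ = √( (3(2·Ste+1)(Ste+3) − (9 + 6·Ste)√(2·Ste+1)) / (12 + 9·Ste + 2·Ste²) ) is well-defined (the expression under the outer square root is positive), satisfies the equation (12 + 9·Ste + 2·Ste²)z⁴ − (42·Ste + 12·Ste² + 18)z² + 9·Ste(1 + 2·Ste) = 0, and lies in the open interval (√(Ste/(2+Ste)), √(3·Ste/(3+Ste))). -/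
theorem stmt_11 (Ste : ℝ) (hSte : 0 < Ste)
    (ξ : ℝ)
    (hξ : ξ = Real.sqrt ((3*(2*Ste+1)*(Ste+3) - (9 + 6*Ste)*Real.sqrt (2*Ste+1)) /
      (12 + 9*Ste + 2*Ste^2))) :
    0 < (3*(2*Ste+1)*(Ste+3) - (9 + 6*Ste)*Real.sqrt (2*Ste+1)) / (12 + 9*Ste + 2*Ste^2) ∧
    (12 + 9*Ste + 2*Ste^2)*ξ^4 - (42*Ste + 12*Ste^2 + 18)*ξ^2 + 9*Ste*(1 + 2*Ste) = 0 ∧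
    ξ ∈ Set.Ioo (Real.sqrt (Ste/(2+Ste))) (Real.sqrt (3*Ste/(3+Ste))) := by
  set s := Real.sqrt (2*Ste+1) with hsdef
  have h2t : (0:ℝ) ≤ 2*Ste+1 := by linarith
  have hs2 : s^2 = 2*Ste+1 := Real.sq_sqrt h2t
  have hs0 : 0 ≤ s := Real.sqrt_nonneg _
  have hD : (0:ℝ) < 12 + 9*Ste + 2*Ste^2 := by nlinarith
  -- numerator positivity
  have hEs : (9+6*Ste)*s < 3*(2*Ste+1)*(Ste+3) := by
    have h2 : (0:ℝ) ≤ 3*(2*Ste+1)*(Ste+3) := by nlinarith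
    have h1 : ((9+6*Ste)*s)^2 < (3*(2*Ste+1)*(Ste+3))^2 := by nlinarith [hs2, hSte]
    exact lt_of_pow_lt_pow_left₀ 2 h2 h1
  have hNpos : 0 < 3*(2*Ste+1)*(Ste+3) - (9+6*Ste)*s := by linarith
  have hfrac : 0 < (3*(2*Ste+1)*(Ste+3) - (9 + 6*Ste)*s) / (12 + 9*Ste + 2*Ste^2) :=
    div_pos hNpos hD
  have hξ2 : ξ^2 = (3*(2*Ste+1)*(Ste+3) - (9 + 6*Ste)*s) / (12 + 9*Ste + 2*Ste^2) := by
    rw [hξ]; exact Real.sq_sqrt hfrac.le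
  have hN : (12 + 9*Ste + 2*Ste^2) * ξ^2 = 3*(2*Ste+1)*(Ste+3) - (9 + 6*Ste)*s := by
    rw [hξ2]; field_simp
  refine ⟨hfrac, ?_, ?_, ?_⟩
  · -- quartic equation
    have h0 : (12 + 9*Ste + 2*Ste^2) *
        ((12 + 9*Ste + 2*Ste^2)*ξ^4 - (42*Ste + 12*Ste^2 + 18)*ξ^2 + 9*Ste*(1 + 2*Ste)) = 0 := by
      linear_combination ((12+9*Ste+2*Ste^2)*ξ^2 + 3*(2*Ste+1)*(Ste+3) - (9+6*Ste)*s
        - (42*Ste+12*Ste^2+18)) * hN + (9+6*Ste)^2 * hs2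
    exact (mul_eq_zero.mp h0).resolve_left hD.ne'
  · -- lower bound
    have key : (6*Ste^2+21*Ste+18)*s < 4*Ste^3+24*Ste^2+39*Ste+18 := by
      have h2 : (0:ℝ) ≤ 4*Ste^3+24*Ste^2+39*Ste+18 := by nlinarith
      have h1 : ((6*Ste^2+21*Ste+18)*s)^2 < (4*Ste^3+24*Ste^2+39*Ste+18)^2 := by
        nlinarith [hs2, hSte, mul_pos hSte hSte, mul_pos (mul_pos hSte hSte) hSte,
          mul_pos (mul_pos (mul_pos hSte hSte) hSte) hSte]
      exact lt_of_pow_lt_pow_left₀ 2 h2 h1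
    have hlt : Ste/(2+Ste) < (3*(2*Ste+1)*(Ste+3) - (9 + 6*Ste)*s) / (12 + 9*Ste + 2*Ste^2) := by
      rw [div_lt_div_iff₀ (by linarith) hD]
      nlinarith [key]
    have := Real.sqrt_lt_sqrt (by positivity) hlt
    rwa [hξ]
  · -- upper bound
    have key : 2*Ste+3 < (Ste+3)*s := by
      have h2 : (0:ℝ) ≤ (Ste+3)*s := by positivity
      have h1 : (2*Ste+3)^2 < ((Ste+3)*s)^2 := by nlinarith [hs2, hSte]
      exact lt_of_pow_lt_pow_left₀ 2 h2 h1
    have hlt : (3*(2*Ste+1)*(Ste+3) - (9 + 6*Ste)*s) / (12 + 9*Ste + 2*Ste^2)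
        < 3*Ste/(3+Ste) := by
      rw [div_lt_div_iff₀ hD (by linarith)]
      nlinarith [key, hSte]
    have := Real.sqrt_lt_sqrt hfrac.le hlt
    rwa [hξ]
end

section
/- For every Ste > 0, the biquadratic equation z⁴ + (6 + Ste)z² − 3·Ste = 0 has a unique positive solution, given explicitly by z = √( (√((6+Ste)² + 12·Ste) − (6+Ste))/2 ), and this solution lies in the open interval (√(Ste/(2+Ste)), √(3·Ste/(3+Ste))). -/
theorem stmt_12 (Ste : ℝ) (hSte : 0 < Ste) :
    (∃! z : ℝ, 0 < z ∧ z^4 + (6 + Ste)*z^2 - 3*Ste = 0) ∧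
    (∀ z : ℝ, 0 < z ∧ z^4 + (6 + Ste)*z^2 - 3*Ste = 0 →
      z = Real.sqrt ((Real.sqrt ((6+Ste)^2 + 12*Ste) - (6+Ste))/2) ∧
      z ∈ Set.Ioo (Real.sqrt (Ste/(2+Ste))) (Real.sqrt (3*Ste/(3+Ste)))) := by
  have hD0 : (0:ℝ) ≤ (6+Ste)^2 + 12*Ste := by nlinarith
  have hsD : Real.sqrt ((6+Ste)^2 + 12*Ste) ^ 2 = (6+Ste)^2 + 12*Ste :=
    Real.sq_sqrt hD0
  have hsDgt : 6 + Ste < Real.sqrt ((6+Ste)^2 + 12*Ste) := by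
    have := (Real.lt_sqrt (x := 6+Ste) (by linarith)).mpr
      (show (6+Ste)^2 < (6+Ste)^2 + 12*Ste by nlinarith)
    exact this
  set y : ℝ := (Real.sqrt ((6+Ste)^2 + 12*Ste) - (6+Ste))/2 with hy_def
  have hy0 : 0 < y := by simp only [hy_def]; linarith
  have hquad : y^2 + (6+Ste)*y - 3*Ste = 0 := by
    simp only [hy_def]
    nlinarith [hsD]
  set z0 : ℝ := Real.sqrt y with hz0_def
  have hz0 : 0 < z0 := Real.sqrt_pos.mpr hy0
  have hz0sq : z0^2 = y := Real.sq_sqrt hy0.le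
  have heq0 : z0^4 + (6+Ste)*z0^2 - 3*Ste = 0 := by
    have h4 : z0^4 = y^2 := by rw [show z0^4 = (z0^2)^2 by ring, hz0sq]
    rw [h4, hz0sq]; exact hquad
  have huniq : ∀ z : ℝ, 0 < z ∧ z^4 + (6+Ste)*z^2 - 3*Ste = 0 → z = z0 := by
    rintro z ⟨hz, he⟩
    have hfac : (z^2 - y) * (z^2 + y + (6+Ste)) = 0 := by
      linear_combination he - hquad
    have hpos : z^2 + y + (6+Ste) > 0 := by positivity
    have h1 : z^2 = y := by
      rcases mul_eq_zero.mp hfac with h | h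
      · linarith
      · linarith
    calc z = Real.sqrt (z^2) := (Real.sqrt_sq hz.le).symm
    _ = Real.sqrt y := by rw [h1]
  have ha : Ste/(2+Ste) < y := by
    rw [div_lt_iff₀ (by linarith)]
    nlinarith [hquad, hy0, mul_pos hy0 hSte, sq_nonneg (y*(2+Ste) - Ste)]
  have hb : y < 3*Ste/(3+Ste) := by
    rw [lt_div_iff₀ (by linarith)]
    nlinarith [hquad, hy0, mul_pos hy0 hSte, sq_nonneg (y*(3+Ste) - 3*Ste)]
  constructor
  · exact ⟨z0, ⟨hz0, heq0⟩, huniq⟩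
  · rintro z hz
    have hzz := huniq z hz
    subst hzz
    refine ⟨rfl, ?_, ?_⟩
    · calc Real.sqrt (Ste/(2+Ste)) < Real.sqrt y :=
        Real.sqrt_lt_sqrt (by positivity) ha
      _ = z0 := rfl
    · exact Real.sqrt_lt_sqrt hy0.le hb
end

section
/- For every Ste > 0, the equation Ste·z⁴ − 6(1 + Ste)z² + 9·Ste = 0 has exactly one solution in the open interval (0, √3), given explicitly by z = √( 3((1 + Ste) − √(2·Ste + 1))/Ste ). -/
theorem stmt_14 (Ste : ℝ) (hSte : 0 < Ste) :
    (∃! z : ℝ, z ∈ Set.Ioo (0:ℝ) (Real.sqrt 3) ∧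
      Ste*z^4 - 6*(1 + Ste)*z^2 + 9*Ste = 0) ∧
    (∀ z : ℝ, z ∈ Set.Ioo (0:ℝ) (Real.sqrt 3) ∧ Ste*z^4 - 6*(1 + Ste)*z^2 + 9*Ste = 0 →
      z = Real.sqrt (3*((1 + Ste) - Real.sqrt (2*Ste + 1))/Ste)) := by
  have h21 : (0:ℝ) < 2*Ste + 1 := by linarith
  set s := Real.sqrt (2*Ste + 1) with hs
  have hs0 : 0 ≤ s := Real.sqrt_nonneg _
  have hs2 : s^2 = 2*Ste + 1 := Real.sq_sqrt h21.le
  have hs1 : 1 < s := by nlinarith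
  have hnum : 0 < (1 + Ste) - s := by nlinarith
  set w := 3*((1 + Ste) - s)/Ste with hwdef
  have hwpos : 0 < w := by
    apply div_pos (by linarith) hSte
  have hwlt3 : w < 3 := by
    rw [hwdef, div_lt_iff₀ hSte]
    nlinarith
  set wp := 3*((1 + Ste) + s)/Ste with hwpdef
  have hwp3 : 3 < wp := by
    rw [hwpdef, lt_div_iff₀ hSte]
    nlinarith
  -- key: the uniqueness/formula claim
  have key : ∀ z : ℝ, z ∈ Set.Ioo (0:ℝ) (Real.sqrt 3) ∧
      Ste*z^4 - 6*(1 + Ste)*z^2 + 9*Ste = 0 → z = Real.sqrt w := by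
    rintro z ⟨⟨hz0, hz3⟩, heq⟩
    have h3 : z^2 < 3 := by
      have h3' : (Real.sqrt 3)^2 = 3 := Real.sq_sqrt (by norm_num)
      nlinarith [Real.sqrt_nonneg (3:ℝ)]
    have hfac : Ste * ((z^2 - w) * (z^2 - wp)) = 0 := by
      rw [hwdef, hwpdef]
      field_simp
      linear_combination Ste*heq - 9*hs2
    have hzw : z^2 = w := by
      rcases mul_eq_zero.mp hfac with h | h
      · exact absurd h hSte.ne'
      rcases mul_eq_zero.mp h with h | h
      · linarith
      · nlinarith
    rw [← hzw, Real.sqrt_sq hz0.le]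
  refine ⟨⟨Real.sqrt w, ⟨⟨Real.sqrt_pos.mpr hwpos, ?_⟩, ?_⟩, fun y hy => key y hy⟩, key⟩
  · exact Real.sqrt_lt_sqrt hwpos.le hwlt3
  · have hsq : (Real.sqrt w)^2 = w := Real.sq_sqrt hwpos.le
    have h4 : (Real.sqrt w)^4 = w^2 := by
      rw [show (4:ℕ) = 2*2 from rfl, pow_mul, hsq]
    rw [h4, hsq, hwdef]
    field_simp
    nlinarith [hs2]
end

section
/- For every Ste > 0, with ξ₁∞² = (3(2·Ste+1)(Ste+3) − (9 + 6·Ste)√(2·Ste+1))/(12 + 9·Ste + 2·Ste²), the coefficients A₁∞ = (6·Ste − (6+2·Ste)ξ₁∞²)/(Ste(ξ₁∞² + 3)) and B₁∞ = ((3·Ste+6)ξ₁∞² − 3·Ste)/(Ste(ξ₁∞² + 3)) satisfy A₁∞ = (√(2·Ste+1) − 1)/Ste and B₁∞ = 1 + (1 − √(2·Ste+1))/Ste. -/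
theorem stmt_15 (Ste : ℝ) (hSte : 0 < Ste)
    (ξsq A B : ℝ)
    (hξsq : ξsq = (3*(2*Ste+1)*(Ste+3) - (9 + 6*Ste)*Real.sqrt (2*Ste+1)) /
      (12 + 9*Ste + 2*Ste^2))
    (hA : A = (6*Ste - (6+2*Ste)*ξsq) / (Ste*(ξsq + 3)))
    (hB : B = ((3*Ste+6)*ξsq - 3*Ste) / (Ste*(ξsq + 3))) :
    A = (Real.sqrt (2*Ste+1) - 1)/Ste ∧ B = 1 + (1 - Real.sqrt (2*Ste+1))/Ste := by
  set s := Real.sqrt (2*Ste+1) with hs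
  have hs2 : s^2 = 2*Ste+1 := Real.sq_sqrt (by linarith)
  have hs1 : 1 < s := by
    nlinarith [Real.sqrt_nonneg (2*Ste+1)]
  have hD : (12 + 9*Ste + 2*Ste^2) > 0 := by nlinarith
  have hξ3 : ξsq + 3 > 0 := by
    rw [hξsq]
    rw [div_add' _ _ _ (ne_of_gt hD)]
    apply div_pos _ hD
    nlinarith [sq_nonneg (s-1), sq_nonneg (s^2 - s), sq_nonneg s, sq_nonneg (s*(s-1))]
  have hξ : ξsq * (12 + 9*Ste + 2*Ste^2) = 3*(2*Ste+1)*(Ste+3) - (9 + 6*Ste)*s := by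
    rw [hξsq, div_mul_cancel₀ _ (ne_of_gt hD)]
  have key : ξsq * (s^2 + s + 4) = 3*s*(s-1) := by
    apply mul_left_cancel₀ (ne_of_gt hD)
    linear_combination (s^2+s+4) * hξ + (-(6*Ste+9)*s - 12*Ste - 36) * hs2
  constructor
  · rw [hA, div_eq_div_iff (by positivity) (ne_of_gt hSte)]
    linear_combination (-Ste)*key + (Ste*ξsq-3*Ste)*hs2
  · have h1 : (1:ℝ) + (1-s)/Ste = (Ste+1-s)/Ste := by field_simp; ring
    rw [hB, h1, div_eq_div_iff (by positivity) (ne_of_gt hSte)]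
    linear_combination Ste*key + Ste*(3-ξsq)*hs2
end

section
/- Fix Ste > 0. For Bi > 0, let ξ₂(Bi) denote the unique positive root of z⁴ + (2/Bi)z³ + (6+Ste)z² + (3/Bi)z − 3·Ste = 0. Then ξ₂(Bi) tends, as Bi → ∞, to the unique positive root ξ₂∞ of z⁴ + (6+Ste)z² − 3·Ste = 0, namely ξ₂∞ = √((√((6+Ste)² + 12·Ste) − (6+Ste))/2). -/
theorem stmt_17 (Ste : ℝ) (hSte : 0 < Ste)
    (ξ₂ : ℝ → ℝ)
    (hroot : ∀ Bi : ℝ, 0 < Bi → 0 < ξ₂ Bi ∧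
      (ξ₂ Bi)^4 + (2/Bi)*(ξ₂ Bi)^3 + (6+Ste)*(ξ₂ Bi)^2 + (3/Bi)*(ξ₂ Bi) - 3*Ste = 0) :
    Filter.Tendsto ξ₂ Filter.atTop
      (nhds (Real.sqrt ((Real.sqrt ((6+Ste)^2 + 12*Ste) - (6+Ste))/2))) := by
  set A : ℝ := 6 + Ste with hA
  have hApos : 0 < A := by simp only [hA]; linarith
  set t : ℝ := Real.sqrt (A^2 + 12*Ste) with ht
  have ht2 : t^2 = A^2 + 12*Ste := Real.sq_sqrt (by positivity)
  have htnn : 0 ≤ t := Real.sqrt_nonneg _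
  have htA : A ≤ t := by nlinarith
  set s : ℝ := (t - A)/2 with hs
  have hs_nonneg : 0 ≤ s := by rw [hs]; linarith
  set L : ℝ := Real.sqrt s with hL
  have hL2 : L^2 = s := Real.sq_sqrt hs_nonneg
  have hLnn : 0 ≤ L := Real.sqrt_nonneg _
  have h4 : L^4 = s^2 := by rw [← hL2]; ring
  have hfL : L^4 + A*L^2 - 3*Ste = 0 := by
    rw [h4, hL2, hs]; linear_combination (1/4) * ht2
  -- upper bound
  have hub : ∀ Bi : ℝ, 0 < Bi → ξ₂ Bi ≤ L := by
    intro Bi hBi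
    obtain ⟨hpos, heq⟩ := hroot Bi hBi
    by_contra h
    push_neg at h
    have h1 : 0 ≤ (2/Bi)*(ξ₂ Bi)^3 := by positivity
    have h2 : 0 ≤ (3/Bi)*(ξ₂ Bi) := by positivity
    have hx2 : L^2 < (ξ₂ Bi)^2 := by nlinarith
    have hx4 : L^4 < (ξ₂ Bi)^4 := by nlinarith [sq_nonneg L, sq_nonneg (ξ₂ Bi)]
    have hA2 : A*L^2 < A*(ξ₂ Bi)^2 := by exact mul_lt_mul_of_pos_left hx2 hApos
    nlinarith [heq, hfL, h1, h2, hx4, hA2]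
  -- explicit formula
  set r : ℝ → ℝ := fun Bi => 3*Ste - (2/Bi)*(ξ₂ Bi)^3 - (3/Bi)*(ξ₂ Bi) with hr
  have hform : ∀ Bi : ℝ, 0 < Bi →
      ξ₂ Bi = Real.sqrt ((Real.sqrt (A^2 + 4*(r Bi)) - A)/2) := by
    intro Bi hBi
    obtain ⟨hpos, heq⟩ := hroot Bi hBi
    have hsq : A^2 + 4*(r Bi) = (2*(ξ₂ Bi)^2 + A)^2 := by
      simp only [hr]; nlinarith [heq]
    rw [hsq, Real.sqrt_sq (by positivity)]
    have : (2*(ξ₂ Bi)^2 + A - A)/2 = (ξ₂ Bi)^2 := by ring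
    rw [this, Real.sqrt_sq hpos.le]
  -- r tends to 3*Ste
  have hrt : Filter.Tendsto r Filter.atTop (nhds (3*Ste)) := by
    have hlow : Filter.Tendsto (fun Bi : ℝ => 3*Ste - (2*L^3 + 3*L)/Bi)
        Filter.atTop (nhds (3*Ste)) := by
      have := (tendsto_const_nhds (α := ℝ) (x := 2*L^3 + 3*L)
          (f := Filter.atTop (α := ℝ))).div_atTop Filter.tendsto_id
      simpa using (tendsto_const_nhds (x := 3*Ste)).sub this
    apply tendsto_of_tendsto_of_tendsto_of_le_of_le' hlow tendsto_const_nhds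
    · filter_upwards [Filter.eventually_gt_atTop (0:ℝ)] with Bi hBi
      obtain ⟨hpos, _⟩ := hroot Bi hBi
      have hle := hub Bi hBi
      simp only [hr]
      have hc : (ξ₂ Bi)^3 ≤ L^3 := pow_le_pow_left₀ hpos.le hle 3
      have e1 : (2/Bi)*(ξ₂ Bi)^3 ≤ (2/Bi)*L^3 :=
        mul_le_mul_of_nonneg_left hc (by positivity)
      have e2 : (3/Bi)*(ξ₂ Bi) ≤ (3/Bi)*L :=
        mul_le_mul_of_nonneg_left hle (by positivity)
      have e3 : (2*L^3 + 3*L)/Bi = (2/Bi)*L^3 + (3/Bi)*L := by ring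
      rw [e3]; linarith
    · filter_upwards [Filter.eventually_gt_atTop (0:ℝ)] with Bi hBi
      obtain ⟨hpos, _⟩ := hroot Bi hBi
      have h1 : 0 ≤ (2/Bi)*(ξ₂ Bi)^3 := by positivity
      have h2 : 0 ≤ (3/Bi)*(ξ₂ Bi) := by positivity
      simp only [hr]; linarith
  -- compose with continuity
  have hc1 : Continuous fun y : ℝ => A^2 + 4*y := by fun_prop
  have hcont : Continuous (fun y : ℝ => Real.sqrt ((Real.sqrt (A^2 + 4*y) - A)/2)) :=
    Real.continuous_sqrt.comp (((Real.continuous_sqrt.comp hc1).sub continuous_const).div_const 2)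
  have hmain := (hcont.tendsto (3*Ste)).comp hrt
  have hval : Real.sqrt ((Real.sqrt (A^2 + 4*(3*Ste)) - A)/2) = L := by
    rw [show A^2 + 4*(3*Ste) = A^2 + 12*Ste by ring]
  rw [hval] at hmain
  apply hmain.congr'
  filter_upwards [Filter.eventually_gt_atTop (0:ℝ)] with Bi hBi
  exact (hform Bi hBi).symm
end

section
/- Fix Ste > 0. For Bi > 0, let ξ₃(Bi) denote the unique root in (0, √3) of (1/Bi)z³ + (6+Ste)z² + (3/Bi)z − 3·Ste = 0. Then ξ₃(Bi) → √(3·Ste/(6+Ste)) as Bi → ∞. -/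
theorem stmt_18 (Ste : ℝ) (hSte : 0 < Ste)
    (ξ₃ : ℝ → ℝ)
    (hroot : ∀ Bi : ℝ, 0 < Bi → ξ₃ Bi ∈ Set.Ioo (0:ℝ) (Real.sqrt 3) ∧
      (1/Bi)*(ξ₃ Bi)^3 + (6+Ste)*(ξ₃ Bi)^2 + (3/Bi)*(ξ₃ Bi) - 3*Ste = 0) :
    Filter.Tendsto ξ₃ Filter.atTop (nhds (Real.sqrt (3*Ste/(6+Ste)))) := by
  have h6 : (0:ℝ) < 6 + Ste := by linarith
  set L2 : ℝ := 3*Ste/(6+Ste) with hL2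
  have hs3 : (0:ℝ) < Real.sqrt 3 := Real.sqrt_pos.mpr (by norm_num)
  have hs3sq : (Real.sqrt 3)^2 = 3 := Real.sq_sqrt (by norm_num)
  -- key bounds for Bi > 0
  have hub : ∀ Bi : ℝ, 0 < Bi → (ξ₃ Bi)^2 ≤ L2 := by
    intro Bi hBi
    obtain ⟨⟨hpos, hlt⟩, heq⟩ := hroot Bi hBi
    have h1 : (0:ℝ) < 1/Bi := by positivity
    have h3 : (0:ℝ) < 3/Bi := by positivity
    have hterm : 0 ≤ (1/Bi)*(ξ₃ Bi)^3 + (3/Bi)*(ξ₃ Bi) := by positivity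
    rw [hL2, le_div_iff₀ h6]
    nlinarith
  have hlb : ∀ Bi : ℝ, 0 < Bi → L2 - (6*Real.sqrt 3)/(6+Ste) * Bi⁻¹ ≤ (ξ₃ Bi)^2 := by
    intro Bi hBi
    obtain ⟨⟨hpos, hlt⟩, heq⟩ := hroot Bi hBi
    have hsq2 : (ξ₃ Bi)^2 < 3 := by nlinarith
    have hcube : (ξ₃ Bi)^3 ≤ 3 * Real.sqrt 3 := by
      nlinarith [mul_lt_mul_of_pos_left hsq2 hpos]
    have hbound : (1/Bi)*(ξ₃ Bi)^3 + (3/Bi)*(ξ₃ Bi) ≤ (6*Real.sqrt 3) * Bi⁻¹ := by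
      have h1 : (1/Bi)*(ξ₃ Bi)^3 ≤ (3*Real.sqrt 3) * Bi⁻¹ := by
        rw [one_div]
        have : Bi⁻¹ * (ξ₃ Bi)^3 ≤ Bi⁻¹ * (3*Real.sqrt 3) :=
          mul_le_mul_of_nonneg_left hcube (by positivity)
        linarith [this]
      have h2 : (3/Bi)*(ξ₃ Bi) ≤ (3*Real.sqrt 3) * Bi⁻¹ := by
        rw [div_mul_eq_mul_div, div_eq_mul_inv]
        have : 3 * ξ₃ Bi ≤ 3 * Real.sqrt 3 := by linarith
        exact mul_le_mul_of_nonneg_right this (by positivity)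
      linarith
    have key : 3*Ste ≤ (6+Ste)*(ξ₃ Bi)^2 + 6*Real.sqrt 3 * Bi⁻¹ := by linarith
    have hc2 : 6*Real.sqrt 3/(6+Ste)*Bi⁻¹*(6+Ste) = 6*Real.sqrt 3*Bi⁻¹ := by
      field_simp
    rw [hL2, sub_le_iff_le_add, div_le_iff₀ h6]
    nlinarith [key, hc2]
  have hsq : Filter.Tendsto (fun Bi => (ξ₃ Bi)^2) Filter.atTop (nhds L2) := by
    have hlo : Filter.Tendsto (fun Bi : ℝ => L2 - (6*Real.sqrt 3)/(6+Ste) * Bi⁻¹)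
        Filter.atTop (nhds L2) := by
      have : Filter.Tendsto (fun Bi : ℝ => (6*Real.sqrt 3)/(6+Ste) * Bi⁻¹)
          Filter.atTop (nhds 0) := by
        simpa using (tendsto_inv_atTop_zero.const_mul ((6*Real.sqrt 3)/(6+Ste)))
      simpa using (tendsto_const_nhds (x := L2)).sub this
    refine tendsto_of_tendsto_of_tendsto_of_le_of_le' hlo tendsto_const_nhds ?_ ?_
    · filter_upwards [Filter.eventually_gt_atTop 0] with Bi hBi using hlb Bi hBi
    · filter_upwards [Filter.eventually_gt_atTop 0] with Bi hBi using hub Bi hBi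
  have hsqrt : Filter.Tendsto (fun Bi => Real.sqrt ((ξ₃ Bi)^2)) Filter.atTop
      (nhds (Real.sqrt L2)) := (Real.continuous_sqrt.tendsto L2).comp hsq
  refine hsqrt.congr' ?_
  filter_upwards [Filter.eventually_gt_atTop 0] with Bi hBi
  exact Real.sqrt_sq (le_of_lt (hroot Bi hBi).1.1)
end

section
/- For every Ste > 0, the quantities ξ_min∞ = √(Ste/(2+Ste)) and ξ_max∞ = √(3·Ste/(3+Ste)) satisfy 0 < ξ_min∞ < ξ_max∞ < √3, and the polynomial p₁∞(z) = (12 + 9·Ste + 2·Ste²)z⁴ − (42·Ste + 12·Ste² + 18)z² + 9·Ste(1+2·Ste) satisfies p₁∞(ξ_min∞) = 2·Ste²(2·Ste+3)²/(Ste+2)² > 0 and p₁∞(ξ_max∞) = −9·Ste(2·Ste+3)²/(Ste+3)² < 0. -/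
theorem stmt_19 (Ste : ℝ) (hSte : 0 < Ste)
    (ξmin ξmax : ℝ) (p : ℝ → ℝ)
    (hξmin : ξmin = Real.sqrt (Ste/(2+Ste)))
    (hξmax : ξmax = Real.sqrt (3*Ste/(3+Ste)))
    (hp : ∀ z, p z = (12 + 9*Ste + 2*Ste^2)*z^4 - (42*Ste + 12*Ste^2 + 18)*z^2 +
      9*Ste*(1+2*Ste)) :
    (0 < ξmin ∧ ξmin < ξmax ∧ ξmax < Real.sqrt 3) ∧
    p ξmin = 2*Ste^2*(2*Ste+3)^2/(Ste+2)^2 ∧ 0 < p ξmin ∧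
    p ξmax = -9*Ste*(2*Ste+3)^2/(Ste+3)^2 ∧ p ξmax < 0 := by
  have h2 : (0:ℝ) < 2 + Ste := by linarith
  have h3 : (0:ℝ) < 3 + Ste := by linarith
  have ha : (0:ℝ) ≤ Ste/(2+Ste) := by positivity
  have hb : (0:ℝ) ≤ 3*Ste/(3+Ste) := by positivity
  have hmin2 : ξmin^2 = Ste/(2+Ste) := by
    rw [hξmin, Real.sq_sqrt ha]
  have hmax2 : ξmax^2 = 3*Ste/(3+Ste) := by
    rw [hξmax, Real.sq_sqrt hb]
  have hpos : 0 < ξmin := by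
    rw [hξmin]; exact Real.sqrt_pos.mpr (by positivity)
  have hlt1 : ξmin < ξmax := by
    rw [hξmin, hξmax]
    apply Real.sqrt_lt_sqrt ha
    rw [div_lt_div_iff₀ h2 h3]
    nlinarith
  have hlt2 : ξmax < Real.sqrt 3 := by
    rw [hξmax]
    apply Real.sqrt_lt_sqrt hb
    rw [div_lt_iff₀ h3]
    nlinarith
  have hpm : p ξmin = 2*Ste^2*(2*Ste+3)^2/(Ste+2)^2 := by
    rw [hp]
    have h4 : ξmin^4 = (Ste/(2+Ste))^2 := by
      rw [← hmin2]; ring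
    rw [h4, hmin2]
    field_simp
    ring
  have hpM : p ξmax = -9*Ste*(2*Ste+3)^2/(Ste+3)^2 := by
    rw [hp]
    have h4 : ξmax^4 = (3*Ste/(3+Ste))^2 := by
      rw [← hmax2]; ring
    rw [h4, hmax2]
    field_simp
    ring
  refine ⟨⟨hpos, hlt1, hlt2⟩, hpm, ?_, hpM, ?_⟩
  · rw [hpm]; positivity
  · rw [hpM]
    have h5 : -9*Ste*(2*Ste+3)^2/(Ste+3)^2 = -(9*Ste*(2*Ste+3)^2/(Ste+3)^2) := by ring
    have : (0:ℝ) < 9*Ste*(2*Ste+3)^2/(Ste+3)^2 := by positivity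
    linarith
end
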